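/- With notation as above (S₁ nonempty, S₂ totally ordered, σ a cyclic |S₂|-insertion into S₃, partial order < extending the S₂-order with S₁ below S₂), the incidence graph I_{σ,<} = {(σ(s), σ(m_σ(s))) : s ∈ S₂}, viewed as a graph on the vertex set S₃ with an edge for each s ∈ S₂, is a forest in which every connected component contains exactly one element of σ(S₁); in particular I_{σ,<} has exactly |S₂| edges and no cycles, and if the graph together with σ(S₁) collapsed to a point is considered, it is a tree. -/

import Mathlib

/-- The strict betweenness relation of the standard cyclic order on `Fin m`. -/
def CycSBtw {m : ℕ} (a b c : Fin m) : Prop :=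
  (a < b ∧ b < c) ∨ (b < c ∧ c < a) ∨ (c < a ∧ a < b)

namespace IncForestAux

open SimpleGraph

variable {m : ℕ} (S₁ : Finset (Fin m)) (μ : Fin m → Fin m)

/-- A measure: elements of `S₁` have measure `0`, others have measure `x+1`. -/
def ν (x : Fin m) : ℕ := if x ∈ S₁ then 0 else x.val + 1

/-- One step towards the root. -/
def stp (x : Fin m) : Fin m := if x ∈ S₁ then x else μ x

/-- The root of a vertex. -/
def root (x : Fin m) : Fin m := (stp S₁ μ)^[m] x

/-- The incidence graph. -/
abbrev Gr : SimpleGraph (Fin m) := SimpleGraph.fromRel (fun x y : Fin m => x ∉ S₁ ∧ y = μ x)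

variable {S₁ μ}
variable (hμ : ∀ s ∉ S₁, μ s ∈ S₁ ∨ (μ s ∉ S₁ ∧ μ s < s))

section
include hμ

lemma nu_mu_lt {a : Fin m} (ha : a ∉ S₁) : ν S₁ (μ a) < ν S₁ a := by
  rcases hμ a ha with h | ⟨h1, h2⟩
  · simp [ν, h, ha]
  · have h2' : (μ a).val < a.val := h2
    simp only [ν, if_neg h1, if_neg ha]
    omega

lemma mu_ne {a : Fin m} (ha : a ∉ S₁) : μ a ≠ a := by
  rcases hμ a ha with h | ⟨h1, h2⟩
  · intro heq; rw [heq] at h; exact ha h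
  · exact h2.ne

lemma adj_mu {a : Fin m} (ha : a ∉ S₁) : (Gr S₁ μ).Adj a (μ a) := by
  rw [SimpleGraph.fromRel_adj]
  exact ⟨(mu_ne hμ ha).symm, Or.inl ⟨ha, rfl⟩⟩

lemma adj_elim {a b : Fin m} (h : (Gr S₁ μ).Adj a b) :
    (a ∉ S₁ ∧ b = μ a ∧ ν S₁ b < ν S₁ a) ∨ (b ∉ S₁ ∧ a = μ b ∧ ν S₁ a < ν S₁ b) := by
  rw [SimpleGraph.fromRel_adj] at h
  rcases h with ⟨hne, h | h⟩
  · exact Or.inl ⟨h.1, h.2, h.2 ▸ nu_mu_lt hμ h.1⟩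
  · exact Or.inr ⟨h.1, h.2, h.2 ▸ nu_mu_lt hμ h.1⟩

end

lemma stp_mem {x : Fin m} (hx : x ∈ S₁) : stp S₁ μ x = x := if_pos hx

lemma iterate_stp_mem {x : Fin m} (hx : x ∈ S₁) : ∀ k, (stp S₁ μ)^[k] x = x := by
  intro k
  induction k with
  | zero => rfl
  | succ k ih => rw [Function.iterate_succ_apply, stp_mem hx, ih]

section
include hμ

lemma root_mem_aux : ∀ k (x : Fin m), ν S₁ x ≤ k → (stp S₁ μ)^[k] x ∈ S₁ := by
  intro k
  induction k with
  | zero =>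
    intro x hx
    simp only [Function.iterate_zero_apply]
    by_contra hx'
    simp [ν, hx'] at hx
  | succ k ih =>
    intro x hx
    by_cases hxs : x ∈ S₁
    · rw [iterate_stp_mem hxs]; exact hxs
    · rw [Function.iterate_succ_apply]
      have h1 : ν S₁ (μ x) < ν S₁ x := nu_mu_lt hμ hxs
      have : stp S₁ μ x = μ x := if_neg hxs
      rw [this]
      exact ih _ (by omega)

lemma root_mem (x : Fin m) : root S₁ μ x ∈ S₁ := by
  apply root_mem_aux hμ
  by_cases hx : x ∈ S₁
  · simp [ν, hx]
  · simp only [ν, if_neg hx]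
    exact x.isLt

lemma root_of_mem {x : Fin m} (hx : x ∈ S₁) : root S₁ μ x = x :=
  iterate_stp_mem hx m

lemma root_stp (x : Fin m) : root S₁ μ (stp S₁ μ x) = root S₁ μ x := by
  have h1 : (stp S₁ μ)^[m] x ∈ S₁ := root_mem hμ x
  calc root S₁ μ (stp S₁ μ x) = (stp S₁ μ)^[m] (stp S₁ μ x) := rfl
    _ = (stp S₁ μ)^[m + 1] x := (Function.iterate_succ_apply _ _ _).symm
    _ = stp S₁ μ ((stp S₁ μ)^[m] x) := Function.iterate_succ_apply' _ _ _
    _ = (stp S₁ μ)^[m] x := stp_mem h1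
    _ = root S₁ μ x := rfl

lemma reachable_stp (x : Fin m) : (Gr S₁ μ).Reachable x (stp S₁ μ x) := by
  by_cases hx : x ∈ S₁
  · rw [stp_mem hx]
  · rw [show stp S₁ μ x = μ x from if_neg hx]
    exact (adj_mu hμ hx).reachable

lemma reachable_iterate (k : ℕ) (x : Fin m) : (Gr S₁ μ).Reachable x ((stp S₁ μ)^[k] x) := by
  induction k generalizing x with
  | zero => rfl
  | succ k ih =>
    rw [Function.iterate_succ_apply]
    exact (reachable_stp hμ x).trans (ih (stp S₁ μ x))

lemma reachable_root (x : Fin m) : (Gr S₁ μ).Reachable x (root S₁ μ x) :=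
  reachable_iterate hμ m x

lemma root_eq_of_adj {a b : Fin m} (h : (Gr S₁ μ).Adj a b) :
    root S₁ μ a = root S₁ μ b := by
  rcases adj_elim hμ h with ⟨ha, rfl, _⟩ | ⟨hb, rfl, _⟩
  · rw [show μ a = stp S₁ μ a from (if_neg ha).symm, root_stp hμ]
  · rw [show μ b = stp S₁ μ b from (if_neg hb).symm, root_stp hμ]

lemma root_eq_of_reachable {a b : Fin m} (h : (Gr S₁ μ).Reachable a b) :
    root S₁ μ a = root S₁ μ b := by
  obtain ⟨w⟩ := h
  induction w with
  | nil => rfl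
  | cons hadj _ ih => exact (root_eq_of_adj hμ hadj).trans ih

lemma no_cycle (v : Fin m) (c : (Gr S₁ μ).Walk v v) (hc : c.IsCycle)
    (hmax : ∀ x ∈ c.support, ν S₁ x ≤ ν S₁ v) : False := by
  cases c with
  | nil => exact Walk.IsCycle.not_of_nil hc
  | @cons _ u _ h q =>
    rw [Walk.cons_isCycle_iff] at hc
    have hu : ν S₁ u ≤ ν S₁ v := hmax u (by simp [Walk.support_cons, q.start_mem_support])
    rcases adj_elim hμ h with ⟨hv1, rfl, _⟩ | ⟨_, _, hlt⟩
    · -- second vertex is μ v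
      have hq0 : q.darts ≠ [] := by
        intro h0
        have hl : q.length = 0 := by rw [← Walk.length_darts, h0]; rfl
        exact h.ne (Walk.eq_of_length_eq_zero hl).symm
      set d := q.darts.getLast hq0 with hd
      have hds : d.snd = v := by rw [hd, Walk.getLast_darts_eq_lastDart]; rfl
      have hdmem : d ∈ q.darts := List.getLast_mem hq0
      have hfs : d.fst ∈ q.support := Walk.dart_fst_mem_support_of_mem_darts q hdmem
      have hfle : ν S₁ d.fst ≤ ν S₁ v := hmax _ (by rw [Walk.support_cons]; exact List.mem_cons_of_mem _ hfs)
      have hadj : (Gr S₁ μ).Adj v d.fst := by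
        have h2 := d.adj
        rw [hds] at h2
        exact h2.symm
      rcases adj_elim hμ hadj with ⟨_, heq, _⟩ | ⟨_, _, hlt2⟩
      · apply hc.2
        have hme : d.edge ∈ q.edges := List.mem_map_of_mem hdmem
        have hedge : s(v, μ v) = d.edge := by
          show s(v, μ v) = s(d.toProd.1, d.toProd.2)
          rw [heq, hds, Sym2.eq_swap]
        rw [hedge]
        exact hme
      · omega
    · omega

theorem gr_acyclic : (Gr S₁ μ).IsAcyclic := by
  intro a c hc
  have hs : c.support.toFinset.Nonempty := by
    rw [List.toFinset_nonempty_iff]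
    exact c.support_ne_nil
  obtain ⟨v, hv, hvmax⟩ := Finset.exists_max_image _ (ν S₁) hs
  rw [List.mem_toFinset] at hv
  apply no_cycle hμ v (c.rotate v hv) (hc.rotate hv)
  intro x hx
  rw [Walk.support_eq_cons] at hx
  rcases List.mem_cons.mp hx with rfl | hx
  · exact le_refl _
  · have hperm := c.support_rotate v hv
    have hx' : x ∈ c.support.tail := hperm.mem_iff.mp hx
    exact hvmax x (List.mem_toFinset.mpr (List.mem_of_mem_tail hx'))

theorem gr_components (c : (Gr S₁ μ).ConnectedComponent) :
    ∃! x : Fin m, x ∈ S₁ ∧ (Gr S₁ μ).connectedComponentMk x = c := by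
  induction c using SimpleGraph.ConnectedComponent.ind with
  | _ x =>
    refine ⟨root S₁ μ x, ⟨root_mem hμ x, ?_⟩, ?_⟩
    · exact SimpleGraph.ConnectedComponent.sound (reachable_root hμ x).symm
    · rintro y ⟨hy, hyc⟩
      have hr : (Gr S₁ μ).Reachable y x := SimpleGraph.ConnectedComponent.exact hyc
      have h1 := root_eq_of_reachable hμ hr
      rw [root_of_mem hμ hy] at h1
      exact h1

theorem gr_edgeSet : (Gr S₁ μ).edgeSet = ↑((S₁ᶜ : Finset (Fin m)).image (fun s => s(s, μ s))) := by
  ext e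
  induction e with
  | _ a b =>
    rw [SimpleGraph.mem_edgeSet, SimpleGraph.fromRel_adj]
    simp only [Finset.coe_image, Set.mem_image, Finset.mem_coe, Finset.mem_compl]
    constructor
    · rintro ⟨hne, ⟨ha, rfl⟩ | ⟨hb, rfl⟩⟩
      · exact ⟨a, ha, rfl⟩
      · exact ⟨b, hb, Sym2.eq_swap⟩
    · rintro ⟨s, hs, he⟩
      rw [Sym2.eq_iff] at he
      rcases he with ⟨rfl, rfl⟩ | ⟨rfl, rfl⟩
      · exact ⟨(mu_ne hμ hs).symm, Or.inl ⟨hs, rfl⟩⟩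
      · exact ⟨mu_ne hμ hs, Or.inr ⟨hs, rfl⟩⟩

theorem gr_ncard : (Gr S₁ μ).edgeSet.ncard = (S₁ᶜ : Finset (Fin m)).card := by
  rw [gr_edgeSet hμ, Set.ncard_coe_finset]
  apply Finset.card_image_of_injOn
  intro s hs t ht h
  rw [Finset.mem_coe, Finset.mem_compl] at hs ht
  simp only [Sym2.eq_iff] at h
  rcases h with ⟨h1, _⟩ | ⟨h1, h2⟩
  · exact h1
  · -- s = μ t? no: pattern s(s, μ s) = s(t, μ t), second case: s = μ t ∧ μ s = t
    exfalso
    subst h1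
    rcases hμ t ht with hmem | ⟨hnm, hlt⟩
    · exact hs hmem
    · rcases hμ (μ t) hs with hmem2 | ⟨hnm2, hlt2⟩
      · rw [h2] at hmem2; exact ht hmem2
      · rw [h2] at hlt2
        exact absurd hlt2 (not_lt.mpr hlt.le)

end

end IncForestAux

/-- The incidence graph `I_{σ,<}`: with `S₁ ⊆ Fin m` nonempty, `S₂ = S₁ᶜ` with the
induced total order, `σ` the inclusion (a cyclic `|S₂|`-insertion), and `μ s = m_σ(s)`
the function characterized as in the definition of the incidence graph, the graph on
`Fin m` with one edge `{s, μ s}` for each `s ∈ S₂` is a forest whose connected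
components each contain exactly one element of `S₁`; in particular it has exactly
`|S₂|` edges and no cycles. -/
theorem incidence_graph_is_forest (m : ℕ) (S₁ : Finset (Fin m)) (hS₁ : S₁.Nonempty)
    (μ : Fin m → Fin m)
    (hμ : ∀ s ∉ S₁,
      (μ s ∈ S₁ ∨ (μ s ∉ S₁ ∧ μ s < s)) ∧
      ∀ t : Fin m, CycSBtw (μ s) t s → (t ∉ S₁ ∧ s < t)) :
    (SimpleGraph.fromRel (fun x y => x ∉ S₁ ∧ y = μ x)).IsAcyclic ∧
    (∀ c : (SimpleGraph.fromRel (fun x y : Fin m => x ∉ S₁ ∧ y = μ x)).ConnectedComponent,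
      ∃! x : Fin m, x ∈ S₁ ∧
        (SimpleGraph.fromRel (fun x y : Fin m => x ∉ S₁ ∧ y = μ x)).connectedComponentMk x
          = c) ∧
    (SimpleGraph.fromRel (fun x y : Fin m => x ∉ S₁ ∧ y = μ x)).edgeSet.ncard
      = (S₁ᶜ : Finset (Fin m)).card := by
  have hμ' : ∀ s ∉ S₁, μ s ∈ S₁ ∨ (μ s ∉ S₁ ∧ μ s < s) := fun s hs => (hμ s hs).1
  exact ⟨IncForestAux.gr_acyclic hμ', fun c => IncForestAux.gr_components hμ' c,
    IncForestAux.gr_ncard hμ'⟩
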